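/- Let f be a continuous automorphism of a compact abelian topological group G with the shadowing property. Then the non-wandering set equals the chain recurrent set: Ω(f) = CR(f). -/

import Mathlib

/-- `f` has the shadowing property. -/
def HasShadowingProperty {G : Type*} [Group G] [TopologicalSpace G] (f : G → G) : Prop :=
  ∀ E ∈ nhds (1 : G), ∃ D ∈ nhds (1 : G),
    ∀ x : ℕ → G, (∀ k : ℕ, f (x k) * (x (k + 1))⁻¹ ∈ D) →
      ∃ y : G, ∀ k : ℕ, f^[k] y * (x k)⁻¹ ∈ E

/-- The non-wandering set of `f`. -/
def nonwanderingSet {G : Type*} [TopologicalSpace G] (f : G → G) : Set G :=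
  {x : G | ∀ U : Set G, IsOpen U → x ∈ U →
    ∃ n : ℕ, 1 ≤ n ∧ ((f^[n] '' U) ∩ U).Nonempty}

/-- The chain recurrent set of `f`. -/
def chainRecurrentSet {G : Type*} [Group G] [TopologicalSpace G] (f : G → G) : Set G :=
  {x : G | ∀ E ∈ nhds (1 : G), ∃ n : ℕ, 1 ≤ n ∧ ∃ c : ℕ → G, c 0 = x ∧ c n = x ∧
    ∀ i < n, f (c i) * (c (i + 1))⁻¹ ∈ E}

/-- For a continuous automorphism of a compact abelian topological group with the
shadowing property, the non-wandering set equals the chain recurrent set. -/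
theorem nonwandering_eq_chainRecurrent {G : Type*} [CommGroup G] [TopologicalSpace G]
    [IsTopologicalGroup G] [CompactSpace G] (f : G ≃* G) (hf : Continuous f)
    (hsh : HasShadowingProperty ⇑f) :
    nonwanderingSet ⇑f = chainRecurrentSet ⇑f := by
  ext x
  constructor
  · -- nonwandering ⊆ chain recurrent
    intro hx E hE
    obtain ⟨V, hVo, hV1, hVV⟩ := exists_open_nhds_one_mul_subset hE
    have hVE : V ⊆ E := fun v hv => by
      have := hVV (Set.mul_mem_mul hv hV1); simpa using this
    have hfV : (⇑f) ⁻¹' V ∈ nhds (1 : G) := by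
      have : Filter.Tendsto (⇑f) (nhds 1) (nhds (1 : G)) := by
        simpa using hf.tendsto (1 : G)
      exact this (hVo.mem_nhds hV1)
    obtain ⟨W, hWo, hW1, hWW⟩ :=
      exists_open_nhds_one_mul_subset (Filter.inter_mem (hVo.mem_nhds hV1) hfV)
    have hWsub : W ⊆ V ∩ (⇑f) ⁻¹' V := fun w hw => by
      have := hWW (Set.mul_mem_mul hw hW1); simpa using this
    set W' : Set G := W ∩ W⁻¹ with hW'
    have hW'o : IsOpen W' := hWo.inter (hWo.preimage continuous_inv)
    have hW'1 : (1 : G) ∈ W' := ⟨hW1, by simpa using hW1⟩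
    set U : Set G := (fun g => g * x⁻¹) ⁻¹' W' with hU
    have hUo : IsOpen U := hW'o.preimage (continuous_mul_right x⁻¹)
    have hxU : x ∈ U := by simp [hU, hW'1]
    obtain ⟨n, hn, w, ⟨z, hzU, hwz⟩, hwU⟩ := hx U hUo hxU
    have hzx : z * x⁻¹ ∈ W' := hzU
    have hxz : x * z⁻¹ ∈ W := by
      have := hzx.2
      simpa using this
    have hwx : w * x⁻¹ ∈ W := hwU.1
    refine ⟨n, hn, fun i => if i = 0 then x else if i = n then x else f^[i] z, by simp,
      by by_cases h : n = 0 <;> simp [h], ?_⟩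
    intro i hi
    have hin : i ≠ n := Nat.ne_of_lt hi
    rcases eq_or_ne i 0 with h0 | h0
    · subst h0
      rcases eq_or_ne n 1 with h1 | h1
      · -- n = 1 : product of two small elements
        subst h1
        norm_num
        have key : f x * x⁻¹ = (f x * (f z)⁻¹) * (f z * x⁻¹) := by group
        have h1' : f x * (f z)⁻¹ ∈ V := by
          have : f (x * z⁻¹) ∈ V := (hWsub hxz).2
          simpa [map_mul, map_inv] using this
        have h2' : f z * x⁻¹ ∈ V := by
          have hv : (⇑f)^[1] z * x⁻¹ ∈ W := by rw [hwz]; exact hwx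
          simpa using (hWsub hv).1
        rw [key]
        exact hVV (Set.mul_mem_mul h1' h2')
      · have hn1 : (0:ℕ) + 1 ≠ n := by omega
        norm_num [if_neg hn1]
        have hfv : f (x * z⁻¹) ∈ V := (hWsub hxz).2
        have heq : f x * (f z)⁻¹ = f (x * z⁻¹) := by
          simp [map_mul, map_inv]
        rw [heq]
        exact hVE hfv
    · have hs0 : i + 1 ≠ 0 := Nat.succ_ne_zero i
      rcases eq_or_ne (i + 1) n with hsn | hsn
      · simp only [if_neg h0, if_neg hin, if_neg hs0, if_pos hsn]
        have hv : (⇑f)^[i + 1] z * x⁻¹ ∈ W := by rw [hsn, hwz]; exact hwx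
        have heq : f ((⇑f)^[i] z) * x⁻¹ = (⇑f)^[i+1] z * x⁻¹ := by
          rw [Function.iterate_succ_apply']
        rw [heq]
        exact hVE (hWsub hv).1
      · simp only [if_neg h0, if_neg hin, if_neg hs0, if_neg hsn]
        have heq : f ((⇑f)^[i] z) * ((⇑f)^[i+1] z)⁻¹ = 1 := by
          rw [Function.iterate_succ_apply' f i z]; group
        rw [heq]
        exact mem_of_mem_nhds hE
  · -- chain recurrent ⊆ nonwandering
    intro hx U hUo hxU
    set E : Set G := (fun g => g * x) ⁻¹' U with hE
    have hEn : E ∈ nhds (1 : G) := by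
      have : IsOpen E := hUo.preimage (continuous_mul_right x)
      exact this.mem_nhds (by simp [hE, hxU])
    obtain ⟨D, hD, hshD⟩ := hsh E hEn
    obtain ⟨n, hn, c, hc0, hcn, hcD⟩ := hx D hD
    set s : ℕ → G := fun k => if k ≤ n then c k else f^[k - n] x with hs
    have hsge : ∀ k, n ≤ k → s k = f^[k - n] x := by
      intro k hk
      rcases Nat.lt_or_ge n k with h | h
      · simp [hs, Nat.not_le.mpr h]
      · have : k = n := le_antisymm h hk
        subst this
        simp [hs, hcn]
    have hpo : ∀ k : ℕ, f (s k) * (s (k + 1))⁻¹ ∈ D := by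
      intro k
      rcases Nat.lt_or_ge k n with h | h
      · have h1 : s k = c k := by simp [hs, Nat.le_of_lt h]
        have h2 : s (k + 1) = c (k + 1) := by simp [hs, Nat.succ_le_of_lt h]
        rw [h1, h2]; exact hcD k h
      · rw [hsge k h, hsge (k + 1) (le_trans h (Nat.le_succ k))]
        have : f (f^[k - n] x) = f^[k + 1 - n] x := by
          rw [Nat.succ_sub h, Function.iterate_succ_apply']
        rw [this]
        simpa using mem_of_mem_nhds hD
    obtain ⟨y, hy⟩ := hshD s hpo
    have hy0 : y ∈ U := by
      have := hy 0
      simp only [Function.iterate_zero_apply, hs, if_pos (Nat.zero_le n), hc0] at this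
      simpa [hE] using this
    have hyn : f^[n] y ∈ U := by
      have := hy n
      simp only [hs, if_pos le_rfl, hcn] at this
      simpa [hE] using this
    exact ⟨n, hn, f^[n] y, ⟨y, hy0, rfl⟩, hyn⟩
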